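/- Let w be a word over {1,…,n} and S, T ⊆ {1,…,n} with |S| = |T|, S < T, and |w|_T ≤ |w|_S. Then there exists N ∈ [S,T] with N ≠ T such that [N,T] has chain length at most n and |w|_M ≤ |w|_N for all M ∈ [N,T]. -/

import Mathlib

/-- The i-th smallest element (0-indexed) of a finite set of naturals. -/
def nth (S : Finset ℕ) (i : ℕ) : ℕ := (S.sort (· ≤ ·)).getD i 0

/-- The order on 2^[n]: S ≤ T iff |S| ≥ |T| and S^i ≤ T^i for i ≤ |T|. -/
def gale (S T : Finset ℕ) : Prop :=
  T.card ≤ S.card ∧ ∀ i < T.card, nth S i ≤ nth T i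

/-- |w|_N : number of occurrences in w of letters from N. -/
def wcount (w : List ℕ) (N : Finset ℕ) : ℕ := (w.filter (· ∈ N)).length

/-- A strictly increasing chain from S to T inside the order interval [S,T]. -/
def isChain (S T : Finset ℕ) (P : List (Finset ℕ)) : Prop :=
  P.head? = some S ∧ P.getLast? = some T ∧
  P.Chain' (fun A B => gale A B ∧ A ≠ B) ∧
  ∀ Q ∈ P, gale S Q ∧ gale Q T

/-- The join S ∨ T in 2^[n]. -/
def galeJoin (S T : Finset ℕ) : Finset ℕ :=
  (Finset.range (min S.card T.card)).image fun i => max (nth S i) (nth T i)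

/-- The meet S ∧ T in 2^[n]. -/
def galeMeet (S T : Finset ℕ) : Finset ℕ :=
  ((Finset.range (min S.card T.card)).image fun i => min (nth S i) (nth T i)) ∪
    (if T.card ≤ S.card then (Finset.Ico T.card S.card).image (nth S)
     else (Finset.Ico S.card T.card).image (nth T))

-- nth as getElem
lemma nth_eq_getElem (S : Finset ℕ) {i : ℕ} (h : i < S.card) :
    nth S i = (S.sort (· ≤ ·))[i]'(by rwa [Finset.length_sort]) := by
  unfold nth
  exact List.getD_eq_getElem _ 0 (by rwa [Finset.length_sort])

lemma nth_mem (S : Finset ℕ) {i : ℕ} (h : i < S.card) : nth S i ∈ S := by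
  rw [nth_eq_getElem S h]
  rw [← Finset.mem_sort (α := ℕ) (· ≤ ·)]
  exact List.getElem_mem _

lemma nth_lt_nth (S : Finset ℕ) {i j : ℕ} (hij : i < j) (hj : j < S.card) :
    nth S i < nth S j := by
  rw [nth_eq_getElem S (hij.trans hj), nth_eq_getElem S hj]
  have := S.sortedLT_sort.pairwise.rel_get_of_lt
    (a := ⟨i, by rw [Finset.length_sort]; exact hij.trans hj⟩) (b := ⟨j, by rwa [Finset.length_sort]⟩)
  simpa [List.get_eq_getElem] using this hij

lemma mem_nth (S : Finset ℕ) {x : ℕ} (hx : x ∈ S) : ∃ i < S.card, nth S i = x := by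
  rw [← Finset.mem_sort (α := ℕ) (· ≤ ·)] at hx
  obtain ⟨i, hi, he⟩ := List.mem_iff_getElem.mp hx
  exact ⟨i, by rwa [Finset.length_sort] at hi, by rw [nth_eq_getElem S (by rwa [Finset.length_sort] at hi)]; exact he⟩

lemma nth_ext {S T : Finset ℕ} (hc : S.card = T.card)
    (h : ∀ i < T.card, nth S i = nth T i) : S = T := by
  have hl : S.sort (· ≤ ·) = T.sort (· ≤ ·) := by
    apply List.ext_getElem (by simp [Finset.length_sort, hc])
    intro i h1 h2
    have hi : i < T.card := by rwa [Finset.length_sort] at h2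
    have := h i hi
    rwa [nth_eq_getElem S (hc ▸ hi), nth_eq_getElem T hi] at this
  have := congrArg List.toFinset hl
  rwa [Finset.sort_toFinset, Finset.sort_toFinset] at this

-- build a Finset from a function strictly monotone on [0,k)
def mkFin (k : ℕ) (f : ℕ → ℕ) : Finset ℕ := ((List.range k).map f).toFinset

lemma sort_mkFin (k : ℕ) (f : ℕ → ℕ) (hf : ∀ p q, p < q → q < k → f p < f q) :
    (mkFin k f).sort (· ≤ ·) = (List.range k).map f := by
  have hpw : ((List.range k).map f).Pairwise (· < ·) := by
    rw [List.pairwise_map]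
    exact (List.pairwise_lt_range (n := k)).imp_of_mem (fun {a b} ha hb h => hf a b h (List.mem_range.mp hb))
  have hnd : ((List.range k).map f).Nodup := hpw.imp (fun h => Nat.ne_of_lt h)
  apply List.Perm.eq_of_pairwise' (Finset.pairwise_sort _ _) ?_
    (List.perm_of_nodup_nodup_toFinset_eq (Finset.sort_nodup _ _) hnd (by rw [Finset.sort_toFinset]; rfl))
  exact List.Pairwise.imp (fun h => Nat.le_of_lt h) hpw

lemma card_mkFin (k : ℕ) (f : ℕ → ℕ) (hf : ∀ p q, p < q → q < k → f p < f q) :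
    (mkFin k f).card = k := by
  rw [← Finset.length_sort (· ≤ ·), sort_mkFin k f hf, List.length_map, List.length_range]

lemma nth_mkFin (k : ℕ) (f : ℕ → ℕ) (hf : ∀ p q, p < q → q < k → f p < f q)
    {i : ℕ} (hi : i < k) : nth (mkFin k f) i = f i := by
  unfold nth
  rw [sort_mkFin k f hf]
  rw [List.getD_eq_getElem _ 0 (by simpa using hi)]
  simp [hi]

lemma wcount_eq_sum (w : List ℕ) (S : Finset ℕ) : wcount w S = ∑ x ∈ S, w.count x := by
  induction w with
  | nil => simp [wcount]
  | cons a w ih =>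
    unfold wcount at *
    rw [List.filter_cons]
    simp only [List.count_cons]
    rw [Finset.sum_add_distrib, ← ih]
    by_cases ha : a ∈ S
    · simp [ha, Finset.sum_ite_eq S a, beq_iff_eq]
    · simp [ha, Finset.sum_ite_eq S a, beq_iff_eq]

lemma image_nth (S : Finset ℕ) : (Finset.range S.card).image (nth S) = S := by
  apply Finset.eq_of_subset_of_card_le
  · intro x hx
    obtain ⟨i, hi, rfl⟩ := Finset.mem_image.mp hx
    exact nth_mem S (Finset.mem_range.mp hi)
  · rw [Finset.card_image_of_injOn, Finset.card_range]
    intro i hi j hj hij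
    rcases Nat.lt_trichotomy i j with h | h | h
    · exact absurd hij (Nat.ne_of_lt (nth_lt_nth S h (Finset.mem_range.mp hj)))
    · exact h
    · exact absurd hij.symm (Nat.ne_of_lt (nth_lt_nth S h (Finset.mem_range.mp hi)))

lemma sum_nth (S : Finset ℕ) (h : ℕ → ℕ) :
    ∑ x ∈ S, h x = ∑ i ∈ Finset.range S.card, h (nth S i) := by
  conv_lhs => rw [← image_nth S]
  rw [Finset.sum_image]
  intro i hi j hj hij
  rcases Nat.lt_trichotomy i j with hl | hl | hl
  · exact absurd hij (Nat.ne_of_lt (nth_lt_nth S hl (Finset.mem_range.mp hj)))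
  · exact hl
  · exact absurd hij.symm (Nat.ne_of_lt (nth_lt_nth S hl (Finset.mem_range.mp hi)))

lemma wcount_eq_sum_nth (w : List ℕ) (S : Finset ℕ) :
    wcount w S = ∑ i ∈ Finset.range S.card, w.count (nth S i) := by
  rw [wcount_eq_sum, sum_nth]

lemma gale_trans {A B C : Finset ℕ} (h1 : gale A B) (h2 : gale B C) : gale A C := by
  obtain ⟨c1, n1⟩ := h1; obtain ⟨c2, n2⟩ := h2
  exact ⟨c2.trans c1, fun i hi => (n1 i (lt_of_lt_of_le hi c2)).trans (n2 i hi)⟩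

lemma sum_nth_lt {S T : Finset ℕ} (hc : S.card = T.card) (h : gale S T) (hne : S ≠ T) :
    ∑ i ∈ Finset.range T.card, nth S i < ∑ i ∈ Finset.range T.card, nth T i := by
  have hne' : ∃ i ∈ Finset.range T.card, nth S i ≠ nth T i := by
    by_contra hcon
    push_neg at hcon
    exact hne (nth_ext hc (fun i hi => hcon i (Finset.mem_range.mpr hi)))
  obtain ⟨i, hi, hne2⟩ := hne'
  exact Finset.sum_lt_sum (fun j hj => h.2 j (Finset.mem_range.mp hj))
    ⟨i, hi, lt_of_le_of_ne (h.2 i (Finset.mem_range.mp hi)) hne2⟩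

-- nat chain bound
lemma nat_chain_bound : ∀ (l : List ℕ) (a : ℕ), l.Chain' (· < ·) → l.head? = some a →
    ∀ b, (∀ x ∈ l, x ≤ b) → a + l.length ≤ b + 1 := by
  intro l
  induction l with
  | nil => intro a _ h; simp at h
  | cons x l ih =>
    intro a hch hh b hb
    simp only [List.head?_cons, Option.some_inj] at hh
    subst hh
    cases l with
    | nil => simpa using hb x (by simp)
    | cons y l =>
      obtain ⟨hxy, hch'⟩ := List.isChain_cons_cons.mp hch
      have := ih y hch' (by simp) b (fun z hz => hb z (List.mem_cons_of_mem _ hz))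
      simp only [List.length_cons] at *
      omega

-- chain length bound
lemma chain_bound {N T : Finset ℕ} (n : ℕ) (hcard : N.card = T.card)
    (hsum : (∑ i ∈ Finset.range T.card, nth T i) + 1 ≤ (∑ i ∈ Finset.range T.card, nth N i) + n)
    (P : List (Finset ℕ)) (hP : isChain N T P) : P.length ≤ n := by
  obtain ⟨hhead, hlast, hch, hmem⟩ := hP
  set k := T.card with hk
  have hcardQ : ∀ Q ∈ P, Q.card = k := by
    intro Q hQ
    have h1 := (hmem Q hQ).1.1
    have h2 := (hmem Q hQ).2.1
    omega
  -- map to sums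
  set g : Finset ℕ → ℕ := fun Q => ∑ i ∈ Finset.range k, nth Q i with hg
  have hchain : (P.map g).Chain' (· < ·) := by
    unfold List.Chain' at hch ⊢
    rw [List.isChain_map]
    rw [List.isChain_iff_getElem] at hch ⊢
    intro i hi
    have hi1 : i < P.length := by omega
    have hi2 : i + 1 < P.length := by omega
    have hA := P.get_mem ⟨i, hi1⟩
    have hB := P.get_mem ⟨i+1, hi2⟩
    obtain ⟨hgale, hne⟩ := hch i hi
    have hcA := hcardQ _ hA
    have hcB := hcardQ _ hB
    have hcc : (P.get ⟨i, hi1⟩).card = (P.get ⟨i+1, hi2⟩).card := by rw [hcA, hcB]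
    have hlt := sum_nth_lt hcc hgale hne
    rw [hcB] at hlt
    exact hlt
  have hhead' : (P.map g).head? = some (g N) := by
    rw [List.head?_map, hhead]; rfl
  have hbound : ∀ x ∈ P.map g, x ≤ g T := by
    intro x hx
    obtain ⟨Q, hQ, rfl⟩ := List.mem_map.mp hx
    have h2 := (hmem Q hQ).2
    exact Finset.sum_le_sum (fun i hi => h2.2 i (Finset.mem_range.mp hi))
  have := nat_chain_bound (P.map g) (g N) hchain hhead' (g T) hbound
  rw [List.length_map] at this
  simp only [hg] at this hsum
  omega

lemma main_lemma (n : ℕ) (w : List ℕ) : ∀ (D : ℕ) (S T : Finset ℕ),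
    S.card = T.card → gale S T → S ≠ T →
    (∀ x ∈ T, x ≤ n) → (∀ x ∈ S, 1 ≤ x) → wcount w T ≤ wcount w S →
    (∑ i ∈ Finset.range T.card, nth T i) ≤ (∑ i ∈ Finset.range T.card, nth S i) + D →
    ∃ N : Finset ℕ, gale S N ∧ gale N T ∧ N ≠ T ∧
      ((∑ i ∈ Finset.range T.card, nth T i) + 1 ≤ (∑ i ∈ Finset.range T.card, nth N i) + n) ∧
      ∀ M : Finset ℕ, gale N M → gale M T → wcount w M ≤ wcount w N := by
  intro D
  induction D with
  | zero =>
    intro S T hcard hST hne _ _ _ hbound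
    exact absurd hbound (by simpa using sum_nth_lt hcard hST hne)
  | succ D ih =>
    intro S T hcard hST hne hTn hS1 hw' hbound
    set k := T.card with hk
    by_cases hstuck : ∀ M : Finset ℕ, gale S M → gale M T → M ≠ S → M ≠ T →
        wcount w M < wcount w T
    · -- stuck case : N = S
      refine ⟨S, ⟨le_refl _, fun i _ => le_refl _⟩, hST, hne, ?_, ?_⟩
      · -- sum bound via CLAIM* + telescoping
        obtain ⟨m, hm⟩ : ∃ m, k = m + 1 := by
          rcases Nat.eq_zero_or_pos k with h0 | h1
          · exfalso
            apply hne
            have : S.card = 0 := by omega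
            have : S = ∅ := Finset.card_eq_zero.mp this
            have hT0 : T = ∅ := Finset.card_eq_zero.mp (by omega)
            rw [this, hT0]
          · exact ⟨k - 1, by omega⟩
        have claim : ∀ i, i + 1 < k → nth T i ≤ nth S (i+1) := by
          by_contra hcon
          push_neg at hcon
          obtain ⟨i, hik, hi⟩ := hcon
          -- the exchange pair A, B
          set s : ℕ → ℕ := nth S with hs
          set t : ℕ → ℕ := nth T with ht
          have hsmono : ∀ p q, p < q → q < k → s p < s q := fun p q h1 h2 =>
            nth_lt_nth S h1 (by omega)
          have htmono : ∀ p q, p < q → q < k → t p < t q := fun p q h1 h2 =>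
            nth_lt_nth T h1 (by omega)
          have hst : ∀ p, p < k → s p ≤ t p := fun p hp => hST.2 p hp
          set fA : ℕ → ℕ := fun p => if p = 0 then s 0 else max (s p) (t (p-1)) with hfA
          set fB : ℕ → ℕ := fun p => if p = k-1 then t (k-1) else min (t p) (s (p+1)) with hfB
          have hfAmono : ∀ p q, p < q → q < k → fA p < fA q := by
            intro p q h1 h2
            simp only [hfA]
            rcases Nat.eq_zero_or_pos p with rfl | hp
            · rw [if_pos rfl, if_neg (by omega)]
              exact lt_of_lt_of_le (hsmono 0 q h1 h2) (le_max_left _ _)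
            · rw [if_neg (by omega), if_neg (by omega)]
              exact max_lt_max (hsmono p q h1 h2) (htmono (p-1) (q-1) (by omega) (by omega))
          have hfBmono : ∀ p q, p < q → q < k → fB p < fB q := by
            intro p q h1 h2
            simp only [hfB]
            rcases eq_or_ne q (k-1) with hq | hq
            · rw [if_pos hq, if_neg (by omega)]
              exact lt_of_le_of_lt (min_le_left _ _) (htmono p (k-1) (by omega) (by omega))
            · rw [if_neg (by omega), if_neg hq]
              exact min_lt_min (htmono p q h1 h2) (hsmono (p+1) (q+1) (by omega) (by omega))
          set A := mkFin k fA with hA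
          set B := mkFin k fB with hB
          have hcA : A.card = k := card_mkFin k fA hfAmono
          have hcB : B.card = k := card_mkFin k fB hfBmono
          have hnthA : ∀ p, p < k → nth A p = fA p := fun p hp => nth_mkFin k fA hfAmono hp
          have hnthB : ∀ p, p < k → nth B p = fB p := fun p hp => nth_mkFin k fB hfBmono hp
          have hgSA : gale S A := by
            refine ⟨by omega, fun p hp => ?_⟩
            rw [hcA] at hp
            rw [hnthA p hp]
            simp only [hfA]
            split
            · next h => rw [h]
            · exact le_max_left _ _
          have hgAT : gale A T := by
            refine ⟨by omega, fun p hp => ?_⟩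
            rw [hnthA p hp]
            simp only [hfA]
            split
            · next h => rw [h]; exact hst 0 (by omega)
            · next h => exact max_le (hst p hp) (le_of_lt (htmono (p-1) p (by omega) hp))
          have hgSB : gale S B := by
            refine ⟨by omega, fun p hp => ?_⟩
            rw [hcB] at hp
            rw [hnthB p hp]
            simp only [hfB]
            split
            · next h => rw [h]; exact hst (k-1) (by omega)
            · next h => exact le_min (hst p hp) (le_of_lt (hsmono p (p+1) (by omega) (by omega)))
          have hgBT : gale B T := by
            refine ⟨by omega, fun p hp => ?_⟩
            rw [hnthB p hp]
            simp only [hfB]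
            split
            · next h => rw [h]
            · exact min_le_left _ _
          have hAi : nth A (i+1) = t i := by
            rw [hnthA (i+1) (by omega)]
            simp only [hfA]
            rw [if_neg (by omega)]
            simp only [Nat.add_sub_cancel]
            exact max_eq_right (le_of_lt hi)
          have hBi : nth B i = s (i+1) := by
            rw [hnthB i (by omega)]
            simp only [hfB]
            rw [if_neg (by omega)]
            exact min_eq_right (le_of_lt hi)
          have hAS : A ≠ S := by
            intro h
            rw [h] at hAi
            have : s (i+1) < t i := hi
            rw [← hAi] at this
            exact absurd this (lt_irrefl _)
          have hBT : B ≠ T := by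
            intro h
            rw [h] at hBi
            have : s (i+1) < t i := hi
            rw [← hBi] at this
            exact absurd this (lt_irrefl _)
          obtain ⟨p0, hp0k, hp0⟩ : ∃ p, p < k ∧ s p < t p := by
            by_contra hcon
            push_neg at hcon
            exact hne (nth_ext hcard (fun p hp =>
              le_antisymm (hST.2 p hp) (hcon p hp)))
          have hAT : A ≠ T := by
            intro h
            have he : nth A p0 = t p0 := by rw [h]
            rw [hnthA p0 hp0k] at he
            simp only [hfA] at he
            split at he
            · next h0 => subst h0; omega
            · next h0 =>
              have : max (s p0) (t (p0-1)) < t p0 :=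
                max_lt hp0 (htmono (p0-1) p0 (by omega) hp0k)
              omega
          have hBS : B ≠ S := by
            intro h
            have he : nth B p0 = s p0 := by rw [h]
            rw [hnthB p0 hp0k] at he
            simp only [hfB] at he
            split at he
            · next h0 => rw [h0] at hp0 he; omega
            · next h0 =>
              have : s p0 < min (t p0) (s (p0+1)) :=
                lt_min hp0 (hsmono p0 (p0+1) (by omega) (by omega))
              omega
          have hwcA := hstuck A hgSA hgAT hAS hAT
          have hwcB := hstuck B hgSB hgBT hBS hBT
          have key : wcount w A + wcount w B = wcount w S + wcount w T := by
            rw [wcount_eq_sum_nth w A, wcount_eq_sum_nth w B, wcount_eq_sum_nth w S,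
              wcount_eq_sum_nth w T]
            have c1 : A.card = m + 1 := by omega
            have c2 : B.card = m + 1 := by omega
            have c3 : S.card = m + 1 := by omega
            have c4 : T.card = m + 1 := by omega
            rw [c1, c2, c3, c4]
            rw [Finset.sum_range_succ' (fun p => w.count (nth A p)) m,
              Finset.sum_range_succ (fun p => w.count (nth B p)) m,
              Finset.sum_range_succ' (fun p => w.count (nth S p)) m,
              Finset.sum_range_succ (fun p => w.count (nth T p)) m]
            have e0 : w.count (nth A 0) = w.count (nth S 0) := by
              rw [hnthA 0 (by omega)]
              simp [hfA, hs]
            have em : w.count (nth B m) = w.count (nth T m) := by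
              rw [hnthB m (by omega)]
              simp only [hfB]
              rw [if_pos (by omega), (by omega : k - 1 = m)]
            have hmid : (∑ p ∈ Finset.range m, w.count (nth A (p+1))) +
                (∑ p ∈ Finset.range m, w.count (nth B p)) =
                (∑ p ∈ Finset.range m, w.count (nth S (p+1))) +
                (∑ p ∈ Finset.range m, w.count (nth T p)) := by
              rw [← Finset.sum_add_distrib, ← Finset.sum_add_distrib]
              refine Finset.sum_congr rfl (fun p hp => ?_)
              have hpm := Finset.mem_range.mp hp
              rw [hnthA (p+1) (by omega), hnthB p (by omega)]
              simp only [hfA, hfB]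
              rw [if_neg (by omega), if_neg (by omega)]
              simp only [Nat.add_sub_cancel]
              rcases le_total (s (p+1)) (t p) with hc | hc
              · rw [max_eq_right hc, min_eq_right hc]
                have e1 : nth S (p+1) = s (p+1) := rfl
                have e2 : nth T p = t p := rfl
                rw [e1, e2]
                omega
              · rw [max_eq_left hc, min_eq_left hc]
            omega
          omega
        -- telescoping
        have aux : ∀ j, j < k → (∑ p ∈ Finset.range (j+1), nth T p) + nth S 0 ≤
            (∑ p ∈ Finset.range (j+1), nth S p) + nth T j := by
          intro j
          induction j with
          | zero => intro _; simp [add_comm]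
          | succ j ihj =>
            intro hjk
            have h1 := ihj (by omega)
            have h2 := claim j (by omega)
            rw [Finset.sum_range_succ (f := nth T), Finset.sum_range_succ (f := nth S)]
            omega
        have h1 := aux m (by omega)
        have hs0 : 1 ≤ nth S 0 := hS1 _ (nth_mem S (by omega))
        have htm : nth T m ≤ n := hTn _ (nth_mem T (by omega))
        rw [← hm] at h1
        omega
      · -- domination
        intro M hSM hMT
        by_cases hMS : M = S
        · rw [hMS]
        · by_cases hMT' : M = T
          · rw [hMT']; exact hw'
          · exact le_of_lt (lt_of_lt_of_le (hstuck M hSM hMT hMS hMT') hw')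
    · -- non-stuck: recurse
      push_neg at hstuck
      obtain ⟨M, hSM, hMT, hMS, hMT', hwM⟩ := hstuck
      have hcM : M.card = T.card := le_antisymm (hSM.1.trans_eq hcard) hMT.1
      have hM1 : ∀ x ∈ M, 1 ≤ x := by
        intro x hx
        obtain ⟨i, hiM, rfl⟩ := mem_nth M hx
        have h1 : nth S i ≤ nth M i := hSM.2 i hiM
        have h2 : 1 ≤ nth S i := hS1 _ (nth_mem S (by omega))
        omega
      have hsum : ∑ i ∈ Finset.range T.card, nth S i < ∑ i ∈ Finset.range T.card, nth M i := by
        have := sum_nth_lt (S := S) (T := M) (by omega) hSM (Ne.symm hMS)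
        rwa [hcM] at this
      obtain ⟨N, hMN, hNT, hNT', hNsum, hNdom⟩ :=
        ih M T hcM hMT hMT' hTn hM1 hwM (by rw [← hk] at hsum ⊢; omega)
      exact ⟨N, gale_trans hSM hMN, hNT, hNT', hNsum, hNdom⟩

theorem stmt_13 (n : ℕ) (w : List ℕ) (hw : ∀ x ∈ w, x ∈ Finset.Icc 1 n)
    (S T : Finset ℕ) (hS : S ⊆ Finset.Icc 1 n) (hT : T ⊆ Finset.Icc 1 n)
    (hcard : S.card = T.card) (hST : gale S T) (hne : S ≠ T)
    (hw' : wcount w T ≤ wcount w S) :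
    ∃ N : Finset ℕ, gale S N ∧ gale N T ∧ N ≠ T ∧
      (∀ P : List (Finset ℕ), isChain N T P → P.length ≤ n) ∧
      ∀ M : Finset ℕ, gale N M → gale M T → wcount w M ≤ wcount w N := by
  have hTn : ∀ x ∈ T, x ≤ n := fun x hx => (Finset.mem_Icc.mp (hT hx)).2
  have hS1 : ∀ x ∈ S, 1 ≤ x := fun x hx => (Finset.mem_Icc.mp (hS hx)).1
  obtain ⟨N, h1, h2, h3, h4, h5⟩ := main_lemma n w (∑ i ∈ Finset.range T.card, nth T i)
    S T hcard hST hne hTn hS1 hw' (by omega)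
  refine ⟨N, h1, h2, h3, ?_, h5⟩
  intro P hP
  have hcN : N.card = T.card := le_antisymm (h1.1.trans_eq hcard) h2.1
  exact chain_bound n hcN h4 P hP
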